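/- Let S be an ℝ≥0-module, let W be a Hausdorff locally convex real topological vector space, and let A be a linear set-valued map assigning to each z ∈ S a nonempty compact convex subset A(z) ⊆ W. Then for every x ∈ S and every y ∈ A(x) there exists a linear selection a of A with a(x) = y. -/

import Mathlib

open scoped NNReal Pointwise

namespace Stmt1Aux

variable {S W : Type*} [AddCommMonoid S] [Module ℝ≥0 S]
    [AddCommGroup W] [Module ℝ W] [TopologicalSpace W] [IsTopologicalAddGroup W]
    [ContinuousSMul ℝ W] [T2Space W] [LocallyConvexSpace ℝ W]

/-- A "good" set-valued map: nonempty compact convex values, additive and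
positively homogeneous. -/
def Good (B : S → Set W) : Prop :=
  (∀ z, (B z).Nonempty) ∧ (∀ z, IsCompact (B z)) ∧ (∀ z, Convex ℝ (B z)) ∧
  (∀ u v, B u + B v = B (u + v)) ∧
  (∀ c : ℝ≥0, 0 < c → ∀ u, B (c • u) = (c : ℝ) • B u)

lemma smul_set_iInter_real {c : ℝ} (hc : c ≠ 0) {ι : Sort*} (t : ι → Set W) :
    c • ⋂ i, t i = ⋂ i, c • t i := by
  have h : ∀ s : Set W, (Units.mk0 c hc) • s = c • s := by
    intro s
    ext w
    simp [Set.mem_smul_set, Units.smul_def]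
  rw [← h, Set.smul_set_iInter]
  exact Set.iInter_congr fun i => h _

/-- The argmax-face of a good map along a continuous functional is good. -/
lemma good_face {B : S → Set W} (hB : Good B) (f : W →L[ℝ] ℝ) :
    Good (fun z => {w ∈ B z | ∀ v ∈ B z, f v ≤ f w}) := by
  obtain ⟨hne, hcp, hcv, hadd, hhom⟩ := hB
  have hclosed : ∀ z, IsClosed {w ∈ B z | ∀ v ∈ B z, f v ≤ f w} := by
    intro z
    have : {w ∈ B z | ∀ v ∈ B z, f v ≤ f w}
        = B z ∩ ⋂ v ∈ B z, {w | f v ≤ f w} := by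
      ext w; simp [Set.mem_iInter]
    rw [this]
    exact (hcp z).isClosed.inter <| isClosed_biInter fun v _ =>
      isClosed_le continuous_const f.continuous
  refine ⟨?_, ?_, ?_, ?_, ?_⟩
  · intro z
    obtain ⟨w, hw, hmax⟩ := (hcp z).exists_isMaxOn (hne z) f.continuous.continuousOn
    exact ⟨w, hw, fun v hv => hmax hv⟩
  · intro z
    exact (hcp z).of_isClosed_subset (hclosed z) (Set.sep_subset _ _)
  · intro z
    rintro w₁ ⟨h₁, hm₁⟩ w₂ ⟨h₂, hm₂⟩ a b ha hb hab
    refine ⟨hcv z h₁ h₂ ha hb hab, fun v hv => ?_⟩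
    simp only [map_add, map_smul, smul_eq_mul]
    have h1 : a * f v ≤ a * f w₁ := mul_le_mul_of_nonneg_left (hm₁ v hv) ha
    have h2 : b * f v ≤ b * f w₂ := mul_le_mul_of_nonneg_left (hm₂ v hv) hb
    have h3 : a * f v + b * f v = f v := by rw [← add_mul, hab, one_mul]
    linarith
  · intro u v
    ext w
    constructor
    · rintro ⟨p, ⟨hp, hpm⟩, q, ⟨hq, hqm⟩, rfl⟩
      refine ⟨?_, ?_⟩
      · rw [← hadd]; exact Set.add_mem_add hp hq
      · intro r hr
        rw [← hadd] at hr
        obtain ⟨r₁, hr₁, r₂, hr₂, rfl⟩ := hr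
        simp only [map_add]
        exact add_le_add (hpm _ hr₁) (hqm _ hr₂)
    · rintro ⟨hw, hwm⟩
      rw [← hadd] at hw
      obtain ⟨p, hp, q, hq, rfl⟩ := hw
      have hpmax : ∀ r ∈ B u, f r ≤ f p := by
        intro r hr
        have := hwm (r + q) (by rw [← hadd]; exact Set.add_mem_add hr hq)
        simp only [map_add] at this ⊢
        linarith
      have hqmax : ∀ r ∈ B v, f r ≤ f q := by
        intro r hr
        have := hwm (p + r) (by rw [← hadd]; exact Set.add_mem_add hp hr)
        simp only [map_add] at this ⊢
        linarith
      exact Set.add_mem_add ⟨hp, hpmax⟩ ⟨hq, hqmax⟩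
  · intro c hc u
    have hc0 : (0 : ℝ) < (c : ℝ) := by exact_mod_cast hc
    ext w
    simp only [Set.mem_setOf_eq, Set.mem_smul_set, hhom c hc u]
    constructor
    · rintro ⟨⟨p, hp, rfl⟩, hmax⟩
      refine ⟨p, ⟨hp, fun v hv => ?_⟩, rfl⟩
      have := hmax ((c : ℝ) • v) ⟨v, hv, rfl⟩
      simp only [map_smul, smul_eq_mul] at this
      exact le_of_mul_le_mul_left (by linarith) hc0
    · rintro ⟨p, ⟨hp, hmax⟩, rfl⟩
      refine ⟨⟨p, hp, rfl⟩, ?_⟩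
      rintro v ⟨q, hq, rfl⟩
      simp only [map_smul, smul_eq_mul]
      exact mul_le_mul_of_nonneg_left (hmax q hq) hc0.le

/-- Every good set-valued map admits a linear selection. -/
lemma exists_sel {B : S → Set W} (hB : Good B) :
    ∃ a : S → W, (∀ z, a z ∈ B z) ∧ (∀ u v, a (u + v) = a u + a v) ∧
      (∀ c : ℝ≥0, 0 < c → ∀ u, a (c • u) = (c : ℝ) • a u) := by
  classical
  -- Zorn's lemma on the dual order (minimal good submap of `B`).
  set s : Set ((S → Set W)ᵒᵈ) :=
    {C | Good (OrderDual.ofDual C) ∧ ∀ z, OrderDual.ofDual C z ⊆ B z} with hs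
  obtain ⟨M, hM⟩ : ∃ M, Maximal (· ∈ s) M := by
    apply zorn_le₀
    intro c hcs hchain
    rcases c.eq_empty_or_nonempty with rfl | ⟨C₀, hC₀⟩
    · exact ⟨OrderDual.toDual B, ⟨hB, fun z => le_rfl⟩, fun z hz => absurd hz (by simp)⟩
    -- the pointwise intersection of the chain
    have hne : Nonempty c := ⟨⟨C₀, hC₀⟩⟩
    set N : S → Set W := fun z => ⋂ C : c, OrderDual.ofDual C.1 z with hN
    have hdir : ∀ z, Directed (· ⊇ ·) (fun C : c => OrderDual.ofDual C.1 z) := by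
      intro z i j
      rcases eq_or_ne i j with rfl | hne'
      · exact ⟨i, subset_rfl, subset_rfl⟩
      rcases hchain i.2 j.2 (Subtype.coe_injective.ne hne') with hij | hij
      · exact ⟨j, fun w hw => hij z hw, subset_rfl⟩
      · exact ⟨i, subset_rfl, fun w hw => hij z hw⟩
    have hmemN : ∀ z (C : c), N z ⊆ OrderDual.ofDual C.1 z := fun z C =>
      Set.iInter_subset _ C
    have hGood : ∀ C : c, Good (OrderDual.ofDual C.1) := fun C => (hcs C.2).1
    have hNne : ∀ z, (N z).Nonempty := by
      intro z
      apply IsCompact.nonempty_iInter_of_directed_nonempty_isCompact_isClosed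
        _ (hdir z)
      · exact fun C => (hGood C).1 z
      · exact fun C => (hGood C).2.1 z
      · exact fun C => ((hGood C).2.1 z).isClosed
    have hNcp : ∀ z, IsCompact (N z) := by
      intro z
      exact ((hGood ⟨C₀, hC₀⟩).2.1 z).of_isClosed_subset
        (isClosed_iInter fun C => ((hGood C).2.1 z).isClosed) (hmemN z ⟨C₀, hC₀⟩)
    have hNcv : ∀ z, Convex ℝ (N z) := fun z =>
      convex_iInter fun C => (hGood C).2.2.1 z
    have hNadd : ∀ u v, N u + N v = N (u + v) := by
      intro u v
      apply Set.Subset.antisymm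
      · rintro w ⟨p, hp, q, hq, rfl⟩
        apply Set.mem_iInter.2
        intro C
        rw [← (hGood C).2.2.2.1 u v]
        exact Set.add_mem_add (hmemN u C hp) (hmemN v C hq)
      · intro w hw
        -- decompose `w` compatibly along the chain, via compactness
        set D : c → Set (W × W) := fun C =>
          (OrderDual.ofDual C.1 u ×ˢ OrderDual.ofDual C.1 v) ∩
            {pq | pq.1 + pq.2 = w} with hD
        have hDne : ∀ C, (D C).Nonempty := by
          intro C
          have hwC : w ∈ OrderDual.ofDual C.1 (u + v) := Set.mem_iInter.1 hw C
          rw [← (hGood C).2.2.2.1 u v] at hwC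
          obtain ⟨p, hp, q, hq, hpq⟩ := hwC
          exact ⟨(p, q), ⟨⟨hp, hq⟩, hpq⟩⟩
        have hDcp : ∀ C, IsCompact (D C) := fun C =>
          (((hGood C).2.1 u).prod ((hGood C).2.1 v)).inter_right
            (isClosed_eq (continuous_fst.add continuous_snd) continuous_const)
        have hDcl : ∀ C, IsClosed (D C) := fun C =>
          ((((hGood C).2.1 u).isClosed.prod ((hGood C).2.1 v).isClosed)).inter
            (isClosed_eq (continuous_fst.add continuous_snd) continuous_const)
        have hDdir : Directed (· ⊇ ·) D := by
          intro i j
          rcases eq_or_ne i j with rfl | hne'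
          · exact ⟨i, subset_rfl, subset_rfl⟩
          rcases hchain i.2 j.2 (Subtype.coe_injective.ne hne') with hij | hij
          · refine ⟨j, ?_, subset_rfl⟩
            rintro pq ⟨⟨h1, h2⟩, h3⟩
            exact ⟨⟨hij u h1, hij v h2⟩, h3⟩
          · refine ⟨i, subset_rfl, ?_⟩
            rintro pq ⟨⟨h1, h2⟩, h3⟩
            exact ⟨⟨hij u h1, hij v h2⟩, h3⟩
        obtain ⟨⟨p, q⟩, hpq⟩ :=
          IsCompact.nonempty_iInter_of_directed_nonempty_isCompact_isClosed
            D hDdir hDne hDcp hDcl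
        have hp : p ∈ N u := Set.mem_iInter.2 fun C => ((Set.mem_iInter.1 hpq C).1).1
        have hq : q ∈ N v := Set.mem_iInter.2 fun C => ((Set.mem_iInter.1 hpq C).1).2
        have hsum : p + q = w := ((Set.mem_iInter.1 hpq ⟨C₀, hC₀⟩).2)
        exact hsum ▸ Set.add_mem_add hp hq
    have hNhom : ∀ c' : ℝ≥0, 0 < c' → ∀ u, N (c' • u) = (c' : ℝ) • N u := by
      intro c' hc' u
      have hc0 : ((c' : ℝ)) ≠ 0 := by positivity
      calc N (c' • u) = ⋂ C : c, (c' : ℝ) • OrderDual.ofDual C.1 u :=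
            Set.iInter_congr fun C => (hGood C).2.2.2.2 c' hc' u
        _ = (c' : ℝ) • N u := (smul_set_iInter_real hc0 _).symm
    refine ⟨OrderDual.toDual N, ⟨⟨hNne, hNcp, hNcv, hNadd, hNhom⟩,
      fun z => (hmemN z ⟨C₀, hC₀⟩).trans ((hcs hC₀).2 z)⟩, ?_⟩
    intro C hC
    intro z
    exact hmemN z ⟨C, hC⟩
  obtain ⟨⟨hMGood, hMsub⟩, hMmax⟩ := hM
  set Mo : S → Set W := OrderDual.ofDual M with hMo
  -- minimality forces singleton values
  have hsingle : ∀ z, ∀ w₁ ∈ Mo z, ∀ w₂ ∈ Mo z, w₁ = w₂ := by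
    by_contra h
    push_neg at h
    obtain ⟨z₀, w₁, hw₁, w₂, hw₂, hne12⟩ := h
    obtain ⟨f, hf⟩ := geometric_hahn_banach_point_point hne12
    set F : S → Set W := fun z => {w ∈ Mo z | ∀ v ∈ Mo z, f v ≤ f w} with hF
    have hFGood : Good F := good_face hMGood f
    have hFs : OrderDual.toDual F ∈ s :=
      ⟨hFGood, fun z => (Set.sep_subset _ _).trans (hMsub z)⟩
    have hle : M ≤ OrderDual.toDual F := by
      intro z; exact Set.sep_subset _ _
    have := hMmax hFs hle
    have hw1F : w₁ ∈ F z₀ := this z₀ hw₁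
    exact absurd (hw1F.2 w₂ hw₂) (not_le.2 hf)
  choose a ha using fun z => hMGood.1 z
  refine ⟨a, fun z => hMsub z (ha z), ?_, ?_⟩
  · intro u v
    have h1 : a u + a v ∈ Mo (u + v) := by
      rw [← hMGood.2.2.2.1 u v]
      exact Set.add_mem_add (ha u) (ha v)
    exact hsingle (u + v) _ (ha (u + v)) _ h1
  · intro c hc u
    have h1 : (c : ℝ) • a u ∈ Mo (c • u) := by
      rw [hMGood.2.2.2.2 c hc u]
      exact Set.smul_mem_smul_set (ha u)
    exact hsingle (c • u) _ (ha (c • u)) _ h1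

end Stmt1Aux

/-- Every linear set-valued map from an `ℝ≥0`-module into nonempty compact convex
subsets of a Hausdorff locally convex real TVS admits a linear selection through
any prescribed point of its graph. -/
theorem stmt1 {S W : Type*} [AddCommMonoid S] [Module ℝ≥0 S]
    [AddCommGroup W] [Module ℝ W] [TopologicalSpace W] [IsTopologicalAddGroup W]
    [ContinuousSMul ℝ W] [T2Space W] [LocallyConvexSpace ℝ W]
    (A : S → Set W)
    (hA : ∀ z, (A z).Nonempty ∧ IsCompact (A z) ∧ Convex ℝ (A z))
    (hadd : ∀ x y, A x + A y = A (x + y))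
    (hhom : ∀ c : ℝ≥0, 0 < c → ∀ x, A (c • x) = (c : ℝ) • A x)
    (x : S) (y : W) (hy : y ∈ A x) :
    ∃ a : S → W, (∀ z, a z ∈ A z) ∧ (∀ u v, a (u + v) = a u + a v) ∧
      (∀ c : ℝ≥0, 0 < c → ∀ u, a (c • u) = (c : ℝ) • a u) ∧ a x = y := by
  classical
  have hAGood : Stmt1Aux.Good A :=
    ⟨fun z => (hA z).1, fun z => (hA z).2.1, fun z => (hA z).2.2, hadd, hhom⟩
  -- the set of all linear selections of `A`
  set Sel : Set (S → W) := {a | (∀ z, a z ∈ A z) ∧ (∀ u v, a (u + v) = a u + a v) ∧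
      (∀ c : ℝ≥0, 0 < c → ∀ u, a (c • u) = (c : ℝ) • a u)} with hSel
  -- it suffices to show `y` is the value at `x` of some linear selection
  suffices hyV : y ∈ (fun a : S → W => a x) '' Sel by
    obtain ⟨a, ⟨h1, h2, h3⟩, hax⟩ := hyV
    exact ⟨a, h1, h2, h3, hax⟩
  set V : Set W := (fun a : S → W => a x) '' Sel with hV
  -- `Sel` is compact (closed subset of the product of compacts) and convex
  have hSelcp : IsCompact Sel := by
    have h1 : Sel = (Set.univ.pi fun z => A z) ∩
        ((⋂ (u : S) (v : S), {a : S → W | a (u + v) = a u + a v}) ∩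
          (⋂ (c : ℝ≥0) (_ : 0 < c) (u : S), {a : S → W | a (c • u) = (c : ℝ) • a u})) := by
      ext a
      simp only [hSel, Set.mem_setOf_eq, Set.mem_inter_iff, Set.mem_pi, Set.mem_univ,
        forall_true_left, Set.mem_iInter, Set.mem_setOf_eq, true_implies]
    rw [h1]
    refine (isCompact_univ_pi fun z => (hA z).2.1).inter_right ?_
    refine IsClosed.inter ?_ ?_
    · exact isClosed_iInter fun u => isClosed_iInter fun v =>
        isClosed_eq (continuous_apply _) ((continuous_apply u).add (continuous_apply v))
    · exact isClosed_iInter fun c => isClosed_iInter fun _ => isClosed_iInter fun u =>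
        isClosed_eq (continuous_apply _) ((continuous_apply u).const_smul _)
  have hVcp : IsCompact V := hSelcp.image (continuous_apply x)
  have hVcv : Convex ℝ V := by
    rintro _ ⟨a₁, ⟨ha₁m, ha₁a, ha₁h⟩, rfl⟩ _ ⟨a₂, ⟨ha₂m, ha₂a, ha₂h⟩, rfl⟩ p q hp hq hpq
    refine ⟨fun z => p • a₁ z + q • a₂ z, ⟨?_, ?_, ?_⟩, rfl⟩
    · exact fun z => (hA z).2.2 (ha₁m z) (ha₂m z) hp hq hpq
    · intro u v
      dsimp only
      rw [ha₁a u v, ha₂a u v, smul_add, smul_add]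
      abel
    · intro c hc u
      dsimp only
      rw [ha₁h c hc u, ha₂h c hc u, smul_add, smul_comm p, smul_comm q]
  -- for every functional, some linear selection maximizes it at `x`
  have hmaxsel : ∀ f : W →L[ℝ] ℝ, ∃ w ∈ V, ∀ v ∈ A x, f v ≤ f w := by
    intro f
    obtain ⟨a, ham, haa, hah⟩ := Stmt1Aux.exists_sel (Stmt1Aux.good_face hAGood f)
    refine ⟨a x, ⟨a, ⟨fun z => (ham z).1, haa, hah⟩, rfl⟩, (ham x).2⟩
  -- conclude `A x ⊆ V` by Hahn–Banach separation
  by_contra hyV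
  obtain ⟨f, u, hfV, hfy⟩ :=
    geometric_hahn_banach_closed_point hVcv hVcp.isClosed hyV
  obtain ⟨w, hwV, hwmax⟩ := hmaxsel f
  exact absurd (hwmax y hy) (by linarith [hfV w hwV])
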